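/- arXiv:2410.09201 — 7 statements merged into one kernel-verified Lean document; each statement's English description precedes it below -/
import Mathlib

section
/- Let voters and candidates be points in ℝ² with the Manhattan (ℓ¹) metric, with the median x-coordinate and median y-coordinate of the voters both equal to 0. For each nonempty closed quadrant Q_i, let c_i be a candidate in Q_i minimizing ℓ¹-distance to the origin. Then for any candidate c lying in quadrant Q_i with c ≠ c_i, at least half of the voters are at ℓ¹-distance from c_i strictly less than or equal to their ℓ¹-distance from c; in particular at least half the voters weakly prefer c_i to c under proximity voting. -/
/-- Manhattan (ℓ¹) distance in the plane. -/
noncomputable def d1 (p q : ℝ × ℝ) : ℝ := |p.1 - q.1| + |p.2 - q.2|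

lemma key_ineq (A B Ay By u w : ℝ) (hA : 0 ≤ A) (hB : 0 ≤ B)
    (hsum : A + Ay ≤ B + By) (hcase : A - B ≤ Ay - By) (hu : u ≤ 0) :
    |u - A| + |w - Ay| ≤ |u - B| + |w - By| := by
  have h1 : |u - A| = -(u - A) := abs_of_nonpos (by linarith)
  have h2 : |u - B| = -(u - B) := abs_of_nonpos (by linarith)
  have h3 : |w - Ay| - |w - By| ≤ |(w - Ay) - (w - By)| := abs_sub_abs_le_abs_sub _ _
  have h4 : (w - Ay) - (w - By) = By - Ay := by ring
  rw [h4] at h3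
  rcases abs_cases (By - Ay) with ⟨h5, _⟩ | ⟨h5, _⟩ <;> linarith

lemma card_mono_subtype {n : ℕ} {P Q : Fin n → Prop} (h : ∀ v, P v → Q v) :
    Nat.card {v // P v} ≤ Nat.card {v // Q v} :=
  Nat.card_le_card_of_injective _ (Subtype.impEmbedding _ _ h).injective

/-- Quadrant lemma: if the voter medians are at the origin, `c_{i₀}` is a candidate in a closed
quadrant minimizing ℓ¹-distance to the origin, and `c_i ≠ c_{i₀}` is any candidate in the same
quadrant, then at least half the voters are weakly closer to `c_{i₀}` than to `c_i`. -/
theorem quadrant_lemma (n m : ℕ) (V : Fin n → ℝ × ℝ) (C : Fin m → ℝ × ℝ)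
    (hxle : 2 * Nat.card {v : Fin n // (V v).1 ≤ 0} ≥ n)
    (hxge : 2 * Nat.card {v : Fin n // 0 ≤ (V v).1} ≥ n)
    (hyle : 2 * Nat.card {v : Fin n // (V v).2 ≤ 0} ≥ n)
    (hyge : 2 * Nat.card {v : Fin n // 0 ≤ (V v).2} ≥ n)
    (εx εy : ℝ) (hεx : εx = 1 ∨ εx = -1) (hεy : εy = 1 ∨ εy = -1)
    (i₀ i : Fin m)
    (hQ₀ : 0 ≤ εx * (C i₀).1 ∧ 0 ≤ εy * (C i₀).2)
    (hmin : ∀ k, (0 ≤ εx * (C k).1 ∧ 0 ≤ εy * (C k).2) →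
      d1 (0, 0) (C i₀) ≤ d1 (0, 0) (C k))
    (hQ : 0 ≤ εx * (C i).1 ∧ 0 ≤ εy * (C i).2)
    (hne : C i ≠ C i₀) :
    2 * Nat.card {v : Fin n // d1 (V v) (C i₀) ≤ d1 (V v) (C i)} ≥ n := by
  obtain ⟨hAx, hAy⟩ := hQ₀
  obtain ⟨hBx, hBy⟩ := hQ
  have habsx : ∀ t : ℝ, |εx * t| = |t| := by
    intro t; rcases hεx with h | h <;> simp [h]
  have habsy : ∀ t : ℝ, |εy * t| = |t| := by
    intro t; rcases hεy with h | h <;> simp [h]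
  set A := εx * (C i₀).1 with hA
  set Ay := εy * (C i₀).2 with hAy'
  set B := εx * (C i).1 with hB
  set By := εy * (C i).2 with hBy'
  -- minimality gives A + Ay ≤ B + By
  have hsum : A + Ay ≤ B + By := by
    have hm := hmin i ⟨hBx, hBy⟩
    simp only [d1] at hm
    have e1 : |(0 : ℝ) - (C i₀).1| = A := by
      rw [zero_sub, abs_neg, ← habsx]; exact abs_of_nonneg hAx
    have e2 : |(0 : ℝ) - (C i₀).2| = Ay := by
      rw [zero_sub, abs_neg, ← habsy]; exact abs_of_nonneg hAy
    have e3 : |(0 : ℝ) - (C i).1| = B := by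
      rw [zero_sub, abs_neg, ← habsx]; exact abs_of_nonneg hBx
    have e4 : |(0 : ℝ) - (C i).2| = By := by
      rw [zero_sub, abs_neg, ← habsy]; exact abs_of_nonneg hBy
    rw [e1, e2, e3, e4] at hm
    exact hm
  -- rewrite d1 through the sign flips
  have dform : ∀ v : Fin n,
      d1 (V v) (C i₀) = |εx * (V v).1 - A| + |εy * (V v).2 - Ay| ∧
      d1 (V v) (C i) = |εx * (V v).1 - B| + |εy * (V v).2 - By| := by
    intro v
    constructor <;> simp only [d1] <;>
    · rw [show ∀ x y : ℝ, εx * x - εx * y = εx * (x - y) from fun x y => by ring,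
        show ∀ x y : ℝ, εy * x - εy * y = εy * (x - y) from fun x y => by ring,
        habsx, habsy]
  rcases le_total (A - B) (Ay - By) with hc | hc
  · -- voters with εx * (V v).1 ≤ 0 weakly prefer C i₀
    have pref : ∀ v : Fin n, εx * (V v).1 ≤ 0 → d1 (V v) (C i₀) ≤ d1 (V v) (C i) := by
      intro v hv
      obtain ⟨e1, e2⟩ := dform v
      rw [e1, e2]
      exact key_ineq A B Ay By _ _ hAx hBx hsum hc hv
    rcases hεx with h | h
    · have incl : ∀ v : Fin n, (V v).1 ≤ 0 → d1 (V v) (C i₀) ≤ d1 (V v) (C i) := by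
        intro v hv; exact pref v (by rw [h]; linarith)
      calc n ≤ 2 * Nat.card {v : Fin n // (V v).1 ≤ 0} := hxle
        _ ≤ 2 * Nat.card {v : Fin n // d1 (V v) (C i₀) ≤ d1 (V v) (C i)} := by
            have := card_mono_subtype incl; omega
    · have incl : ∀ v : Fin n, 0 ≤ (V v).1 → d1 (V v) (C i₀) ≤ d1 (V v) (C i) := by
        intro v hv; exact pref v (by rw [h]; linarith)
      calc n ≤ 2 * Nat.card {v : Fin n // 0 ≤ (V v).1} := hxge
        _ ≤ 2 * Nat.card {v : Fin n // d1 (V v) (C i₀) ≤ d1 (V v) (C i)} := by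
            have := card_mono_subtype incl; omega
  · -- voters with εy * (V v).2 ≤ 0 weakly prefer C i₀
    have pref : ∀ v : Fin n, εy * (V v).2 ≤ 0 → d1 (V v) (C i₀) ≤ d1 (V v) (C i) := by
      intro v hv
      obtain ⟨e1, e2⟩ := dform v
      rw [e1, e2]
      have := key_ineq Ay By A B (εy * (V v).2) (εx * (V v).1) hAy hBy (by linarith) hc hv
      linarith
    rcases hεy with h | h
    · have incl : ∀ v : Fin n, (V v).2 ≤ 0 → d1 (V v) (C i₀) ≤ d1 (V v) (C i) := by
        intro v hv; exact pref v (by rw [h]; linarith)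
      calc n ≤ 2 * Nat.card {v : Fin n // (V v).2 ≤ 0} := hyle
        _ ≤ 2 * Nat.card {v : Fin n // d1 (V v) (C i₀) ≤ d1 (V v) (C i)} := by
            have := card_mono_subtype incl; omega
    · have incl : ∀ v : Fin n, 0 ≤ (V v).2 → d1 (V v) (C i₀) ≤ d1 (V v) (C i) := by
        intro v hv; exact pref v (by rw [h]; linarith)
      calc n ≤ 2 * Nat.card {v : Fin n // 0 ≤ (V v).2} := hyge
        _ ≤ 2 * Nat.card {v : Fin n // d1 (V v) (C i₀) ≤ d1 (V v) (C i)} := by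
            have := card_mono_subtype incl; omega
end

section
/- Let m ≥ 1 and for each voter j let ρ(·, j) : {1,…,m} → {1,…,m} be a bijection (the rank of each candidate). Place candidate i at x_i = 2m·e_i ∈ ℝ^m and voter j at y_j = (m − ρ(1,j), …, m − ρ(m,j)). Then for every voter j and every candidate i, the ℓ∞-distance from y_j to x_i equals m + ρ(i,j); in particular the ℓ∞-distances from y_j to the candidates are strictly increasing in the rank ρ(i,j), so the embedding realizes each voter's preference order under proximity voting. -/
/-- Candidate-simplex embedding under the ℓ∞ norm: candidate `i` is at `2m·e_i`, voter `j` is at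
`(m - ρ(1,j), …, m - ρ(m,j))` where `ρ(i,j) = (ρ j i) + 1 ∈ {1,…,m}` is the rank of candidate
`i` for voter `j`. Then the ℓ∞-distance from voter `j` to candidate `i` is `m + ρ(i,j)`, and in
particular these distances are strictly increasing in the rank. -/
theorem candidate_simplex_inf (m : ℕ) (hm : 1 ≤ m) (J : Type*) (ρ : J → Fin m ≃ Fin m)
    (x : Fin m → Fin m → ℝ) (hx : ∀ i k, x i k = if k = i then 2 * (m : ℝ) else 0)
    (y : J → Fin m → ℝ) (hy : ∀ j k, y j k = (m : ℝ) - (((ρ j k : ℕ) : ℝ) + 1)) :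
    (∀ (j : J) (i : Fin m),
        (⨆ k, |y j k - x i k|) = (m : ℝ) + (((ρ j i : ℕ) : ℝ) + 1)) ∧
    (∀ (j : J) (i i' : Fin m), (ρ j i : ℕ) < (ρ j i' : ℕ) →
        (⨆ k, |y j k - x i k|) < ⨆ k, |y j k - x i' k|) := by
  have hrank : ∀ (j : J) (k : Fin m), ((ρ j k : ℕ) : ℝ) + 1 ≤ (m : ℝ) := by
    intro j k
    have : (ρ j k : ℕ) + 1 ≤ m := (ρ j k).2
    exact_mod_cast this
  haveI : Nonempty (Fin m) := ⟨⟨0, hm⟩⟩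
  have key : ∀ (j : J) (i : Fin m),
      (⨆ k, |y j k - x i k|) = (m : ℝ) + (((ρ j i : ℕ) : ℝ) + 1) := by
    intro j i
    apply le_antisymm
    · apply ciSup_le
      intro k
      rw [hy, hx]
      by_cases h : k = i
      · subst h
        simp only [if_pos rfl]
        rw [abs_of_nonpos (by push_cast; nlinarith [hrank j k])]
        simp only [if_true]
        ring_nf
        linarith
      · simp only [if_neg h, sub_zero]
        rw [abs_of_nonneg (by nlinarith [hrank j k])]
        have h1 : (0 : ℝ) ≤ ((ρ j k : ℕ) : ℝ) := Nat.cast_nonneg _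
        nlinarith [h1, (Nat.cast_nonneg (ρ j i : ℕ) : (0:ℝ) ≤ _)]
    · have hb : BddAbove (Set.range fun k => |y j k - x i k|) :=
        (Set.finite_range _).bddAbove
      have := le_ciSup hb i
      have hv : |y j i - x i i| = (m : ℝ) + (((ρ j i : ℕ) : ℝ) + 1) := by
        rw [hy, hx, if_pos rfl]
        rw [abs_of_nonpos (by nlinarith [hrank j i])]
        ring
      linarith [this, hv.ge, hv.le]
  refine ⟨key, fun j i i' h => ?_⟩
  rw [key j i, key j i']
  have : ((ρ j i : ℕ) : ℝ) < ((ρ j i' : ℕ) : ℝ) := by exact_mod_cast h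
  linarith
end

section
/- Let m ≥ 1, p ≥ 1 a real number, and for each voter j let ρ(·, j) : {1,…,m} → {1,…,m} be a bijection. Place candidate i at x_i = 2m·e_i ∈ ℝ^m and voter j at y_j = (m − ρ(1,j), …, m − ρ(m,j)). Then for any candidates i, k with ρ(k,j) < ρ(i,j), the ℓᵖ-distance from y_j to x_k is strictly less than the ℓᵖ-distance from y_j to x_i. -/
/-- Candidate-simplex embedding under ℓᵖ norms, `p ≥ 1`: candidate `i` at `2m·e_i`, voter `j` at
`(m - ρ(1,j), …, m - ρ(m,j))` with rank `ρ(i,j) = (ρ j i) + 1`. If `ρ(k,j) < ρ(i,j)` then the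
ℓᵖ-distance from voter `j` to candidate `k` is strictly smaller than that to candidate `i`. -/
theorem candidate_simplex_lp (m : ℕ) (hm : 1 ≤ m) (p : ℝ) (hp : 1 ≤ p)
    (J : Type*) (ρ : J → Fin m ≃ Fin m)
    (x : Fin m → Fin m → ℝ) (hx : ∀ i k, x i k = if k = i then 2 * (m : ℝ) else 0)
    (y : J → Fin m → ℝ) (hy : ∀ j k, y j k = (m : ℝ) - (((ρ j k : ℕ) : ℝ) + 1)) :
    ∀ (j : J) (i k : Fin m), (ρ j k : ℕ) < (ρ j i : ℕ) →
      (∑ l, |y j l - x k l| ^ p) ^ (1 / p) < (∑ l, |y j l - x i l| ^ p) ^ (1 / p) := by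
  intro j i k hlt
  have hp0 : (0:ℝ) < p := by linarith
  have hik : i ≠ k := by rintro rfl; exact lt_irrefl _ hlt
  have hri1 : ((ρ j i : ℕ) : ℝ) + 1 ≤ (m : ℝ) := by
    exact_mod_cast Nat.succ_le_of_lt (ρ j i).isLt
  have hrk1 : ((ρ j k : ℕ) : ℝ) + 1 ≤ (m : ℝ) := by
    exact_mod_cast Nat.succ_le_of_lt (ρ j k).isLt
  have hrlt : ((ρ j k : ℕ) : ℝ) < ((ρ j i : ℕ) : ℝ) := by exact_mod_cast hlt
  have hrk0 : (0:ℝ) ≤ ((ρ j k : ℕ) : ℝ) := Nat.cast_nonneg _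
  have habs1 : ∀ c, |y j c - x c c| = (m : ℝ) + ((ρ j c : ℕ) : ℝ) + 1 := by
    intro c
    rw [hy, hx, if_pos rfl]
    have h1 : (m : ℝ) - (((ρ j c : ℕ) : ℝ) + 1) - 2 * m
        = -((m : ℝ) + ((ρ j c : ℕ) : ℝ) + 1) := by ring
    rw [h1, abs_neg, abs_of_nonneg (by positivity)]
  have habs2 : ∀ c c', c ≠ c' → |y j c - x c' c| = (m : ℝ) - ((ρ j c : ℕ) : ℝ) - 1 := by
    intro c c' h
    rw [hy, hx, if_neg h, sub_zero]
    have hcm : ((ρ j c : ℕ) : ℝ) + 1 ≤ (m : ℝ) := by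
      exact_mod_cast Nat.succ_le_of_lt (ρ j c).isLt
    rw [abs_of_nonneg (by linarith)]
    ring
  have hksub : k ∈ Finset.univ.erase i := Finset.mem_erase.mpr ⟨Ne.symm hik, Finset.mem_univ k⟩
  have split : ∀ c, ∑ l, |y j l - x c l| ^ p
      = |y j i - x c i| ^ p + (|y j k - x c k| ^ p
        + ∑ l ∈ (Finset.univ.erase i).erase k, |y j l - x c l| ^ p) := by
    intro c
    rw [← Finset.add_sum_erase _ _ (Finset.mem_univ i), ← Finset.add_sum_erase _ _ hksub]
  have hSlt : (∑ l, |y j l - x k l| ^ p) < ∑ l, |y j l - x i l| ^ p := by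
    rw [split i, split k]
    have hcongr : ∑ l ∈ (Finset.univ.erase i).erase k, |y j l - x k l| ^ p
        = ∑ l ∈ (Finset.univ.erase i).erase k, |y j l - x i l| ^ p := by
      refine Finset.sum_congr rfl fun l hl => ?_
      have hlk : l ≠ k := (Finset.mem_erase.mp hl).1
      have hli : l ≠ i := (Finset.mem_erase.mp (Finset.mem_erase.mp hl).2).1
      rw [hx, hx, if_neg hlk, if_neg hli]
    rw [hcongr, habs1 k, habs1 i, habs2 i k hik, habs2 k i (Ne.symm hik)]
    have h1 : ((m : ℝ) + ((ρ j k : ℕ) : ℝ) + 1) ^ p < ((m : ℝ) + ((ρ j i : ℕ) : ℝ) + 1) ^ p :=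
      Real.rpow_lt_rpow (by positivity) (by linarith) hp0
    have h2 : ((m : ℝ) - ((ρ j i : ℕ) : ℝ) - 1) ^ p ≤ ((m : ℝ) - ((ρ j k : ℕ) : ℝ) - 1) ^ p :=
      Real.rpow_le_rpow (by linarith) (by linarith) (le_of_lt hp0)
    linarith
  exact Real.rpow_lt_rpow
    (Finset.sum_nonneg fun l _ => Real.rpow_nonneg (abs_nonneg _) p) hSlt
    (by positivity)
end

section
/- Let n ≥ 1, m ≥ 1, B ≥ m a real number, and for each voter j ∈ {1,…,n} let ρ(·, j) : {1,…,m} → {1,…,m} be a bijection. Place voter j at y_j = B·e_j ∈ ℝⁿ and candidate i at x_i = (−ρ(i,1), …, −ρ(i,n)). Then for every voter j and candidate i, the ℓ∞-distance from y_j to x_i equals B + ρ(i,j); hence the distances are strictly increasing in ρ(i,j) and the embedding realizes each voter's preferences under ℓ∞ proximity voting. -/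
/-- Voter-simplex embedding under the ℓ∞ norm: voter `j` at `B·e_j ∈ ℝⁿ` with `B ≥ m`, candidate
`i` at `(-ρ(i,1), …, -ρ(i,n))` with rank `ρ(i,j) = (ρ j i) + 1 ∈ {1,…,m}`. Then the ℓ∞-distance
from voter `j` to candidate `i` equals `B + ρ(i,j)`, hence is strictly increasing in rank. -/
theorem voter_simplex_inf (n m : ℕ) (hn : 1 ≤ n) (hm : 1 ≤ m)
    (B : ℝ) (hB : (m : ℝ) ≤ B)
    (ρ : Fin n → Fin m ≃ Fin m)
    (y : Fin n → Fin n → ℝ) (hy : ∀ j k, y j k = if k = j then B else 0)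
    (x : Fin m → Fin n → ℝ) (hx : ∀ i k, x i k = -(((ρ k i : ℕ) : ℝ) + 1)) :
    (∀ (j : Fin n) (i : Fin m),
        (⨆ k, |y j k - x i k|) = B + (((ρ j i : ℕ) : ℝ) + 1)) ∧
    (∀ (j : Fin n) (i i' : Fin m), (ρ j i : ℕ) < (ρ j i' : ℕ) →
        (⨆ k, |y j k - x i k|) < ⨆ k, |y j k - x i' k|) := by
  have hBpos : (0:ℝ) ≤ B := le_trans (by positivity) hB
  have : Nonempty (Fin n) := ⟨⟨0, hn⟩⟩
  have key : ∀ (j : Fin n) (i : Fin m),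
      (⨆ k, |y j k - x i k|) = B + (((ρ j i : ℕ) : ℝ) + 1) := by
    intro j i
    apply le_antisymm
    · apply ciSup_le
      intro k
      rw [hy, hx]
      by_cases h : k = j
      · subst h
        rw [if_pos rfl, sub_neg_eq_add]
        rw [abs_of_nonneg (by positivity)]
      · rw [if_neg h, zero_sub, abs_neg, abs_neg,
          abs_of_nonneg (by positivity : (0:ℝ) ≤ ((ρ k i : ℕ) : ℝ) + 1)]
        have hk : ((ρ k i : ℕ) : ℝ) + 1 ≤ m := by
          have h2 : (ρ k i : ℕ) + 1 ≤ m := (ρ k i).isLt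
          have h3 := (Nat.cast_le (α := ℝ)).mpr h2
          push_cast at h3
          linarith
        have : ((ρ k i : ℕ) : ℝ) + 1 ≤ B := le_trans hk hB
        have h4 : (0:ℝ) ≤ ((ρ j i : ℕ) : ℝ) := Nat.cast_nonneg _
        linarith
    · have : B + (((ρ j i : ℕ) : ℝ) + 1) = |y j j - x i j| := by
        rw [hy, hx, if_pos rfl]
        rw [sub_neg_eq_add, abs_of_nonneg (by positivity)]
      rw [this]
      apply le_ciSup (f := fun k => |y j k - x i k|)
      exact Set.Finite.bddAbove (Set.finite_range _)
  refine ⟨key, fun j i i' h => ?_⟩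
  rw [key j i, key j i']
  have : ((ρ j i : ℕ) : ℝ) < ((ρ j i' : ℕ) : ℝ) := by exact_mod_cast h
  linarith
end

section
/- Let p > 1, n ≥ 1, m ≥ 1, and for each voter j a bijection ρ(·,j) : {1,…,m} → {1,…,m}. There exists B > 0 such that placing voter j at y_j = B·e_j ∈ ℝⁿ and candidate i at x_i = (−ρ(i,1),…,−ρ(i,n)), for all voters j and candidates i, k with ρ(i,j) < ρ(k,j), the ℓᵖ-distance from y_j to x_i is strictly less than the ℓᵖ-distance from y_j to x_k. -/
open Real Finset

private lemma bern {p x : ℝ} (hp : 1 < p) (hx : 1 ≤ x) :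
    x ^ p + p * x ^ (p - 1) ≤ (x + 1) ^ p := by
  have hx0 : 0 < x := by linarith
  have h1 : 1 + p * (1 / x) ≤ (1 + 1 / x) ^ p :=
    one_add_mul_self_le_rpow_one_add (le_trans (by norm_num) (by positivity : (0:ℝ) ≤ 1/x)) hp.le
  have h2 : x ^ p * (1 + p * (1 / x)) ≤ x ^ p * (1 + 1 / x) ^ p :=
    mul_le_mul_of_nonneg_left h1 (by positivity)
  calc x ^ p + p * x ^ (p - 1) = x ^ p * (1 + p * (1 / x)) := by
        rw [Real.rpow_sub hx0]; field_simp; simp only [Real.rpow_one]; ring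
    _ ≤ x ^ p * (1 + 1 / x) ^ p := h2
    _ = (x + 1) ^ p := by
        rw [← Real.mul_rpow hx0.le (by positivity)]
        congr 1; field_simp

/-- Voter-simplex embedding under ℓᵖ norms, `p > 1`: there is `B > 0` such that, placing voter `j`
at `B·e_j ∈ ℝⁿ` and candidate `i` at `(-ρ(i,1), …, -ρ(i,n))` (rank `ρ(i,j) = (ρ j i) + 1`),
whenever `ρ(i,j) < ρ(k,j)` the ℓᵖ-distance from voter `j` to candidate `i` is strictly smaller
than that to candidate `k`. -/
theorem voter_simplex_lp (n m : ℕ) (hn : 1 ≤ n) (hm : 1 ≤ m) (p : ℝ) (hp : 1 < p)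
    (ρ : Fin n → Fin m ≃ Fin m) :
    ∃ B : ℝ, 0 < B ∧
      ∀ (j : Fin n) (i k : Fin m), (ρ j i : ℕ) < (ρ j k : ℕ) →
        (∑ l, |(if l = j then B else 0) - (-(((ρ l i : ℕ) : ℝ) + 1))| ^ p) ^ (1 / p) <
        (∑ l, |(if l = j then B else 0) - (-(((ρ l k : ℕ) : ℝ) + 1))| ^ p) ^ (1 / p) := by
  have hp0 : 0 < p := by linarith
  have htop : Filter.Tendsto (fun B : ℝ => B ^ (p - 1)) Filter.atTop Filter.atTop :=
    tendsto_rpow_atTop (by linarith)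
  obtain ⟨B, hB1, hBgt⟩ :=
    ((Filter.eventually_ge_atTop (1 : ℝ)).and
      (htop.eventually_gt_atTop ((n * (m : ℝ) ^ p) / p))).exists
  have hB0 : (0 : ℝ) < B := by linarith
  have hBbig : (n : ℝ) * (m : ℝ) ^ p < p * B ^ (p - 1) := by
    rw [div_lt_iff₀ hp0] at hBgt; linarith
  refine ⟨B, hB0, fun j i k hik => ?_⟩
  set a : ℝ := ((ρ j i : ℕ) : ℝ) + 1 with ha
  set b : ℝ := ((ρ j k : ℕ) : ℝ) + 1 with hb
  have ha1 : 1 ≤ a := le_add_of_nonneg_left (Nat.cast_nonneg _)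
  have hab : a + 1 ≤ b := by
    have : ((ρ j i : ℕ) : ℝ) + 1 ≤ ((ρ j k : ℕ) : ℝ) := by exact_mod_cast hik
    simp only [ha, hb]; linarith
  -- sum decomposition
  have hsum : ∀ i : Fin m,
      (∑ l, |(if l = j then B else 0) - (-(((ρ l i : ℕ) : ℝ) + 1))| ^ p) =
      (B + (((ρ j i : ℕ) : ℝ) + 1)) ^ p
        + ∑ l ∈ univ.erase j, (((ρ l i : ℕ) : ℝ) + 1) ^ p := by
    intro i
    rw [← Finset.add_sum_erase _ _ (mem_univ j)]
    congr 1
    · simp only [if_pos rfl, if_true, sub_neg_eq_add]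
      rw [abs_of_pos (by positivity)]
    · refine Finset.sum_congr rfl fun l hl => ?_
      rw [if_neg (Finset.ne_of_mem_erase hl), sub_neg_eq_add, zero_add,
        abs_of_pos (by positivity)]
  -- bounds on the rest
  have hrest_le : ∀ i : Fin m,
      ∑ l ∈ univ.erase j, (((ρ l i : ℕ) : ℝ) + 1) ^ p ≤ (n - 1) * (m : ℝ) ^ p := by
    intro i
    have := Finset.sum_le_card_nsmul (univ.erase j)
      (fun l => (((ρ l i : ℕ) : ℝ) + 1) ^ p) ((m : ℝ) ^ p) ?_
    · simpa [Finset.card_erase_of_mem, nsmul_eq_mul, Nat.cast_sub hn] using this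
    · intro l _
      refine Real.rpow_le_rpow (by positivity) ?_ hp0.le
      have : (ρ l i : ℕ) + 1 ≤ m := (ρ l i).isLt
      exact_mod_cast this
  have hrest_ge : ∀ i : Fin m,
      ((n : ℝ) - 1) * 1 ≤ ∑ l ∈ univ.erase j, (((ρ l i : ℕ) : ℝ) + 1) ^ p := by
    intro i
    have := Finset.card_nsmul_le_sum (univ.erase j)
      (fun l => (((ρ l i : ℕ) : ℝ) + 1) ^ p) (1 : ℝ) ?_
    · simpa [Finset.card_erase_of_mem, nsmul_eq_mul, Nat.cast_sub hn] using this
    · intro l _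
      exact Real.one_le_rpow (le_add_of_nonneg_left (Nat.cast_nonneg _)) hp0.le
  -- main middle inequality
  have hmono : (B + a) ^ p + p * B ^ (p - 1) ≤ (B + b) ^ p := by
    have h1 : (B + a) ^ p + p * (B + a) ^ (p - 1) ≤ (B + a + 1) ^ p :=
      bern hp (by linarith)
    have h2 : (B + a + 1) ^ p ≤ (B + b) ^ p :=
      Real.rpow_le_rpow (by linarith) (by linarith) hp0.le
    have h3 : B ^ (p - 1) ≤ (B + a) ^ (p - 1) :=
      Real.rpow_le_rpow hB0.le (by linarith) (by linarith)
    nlinarith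
  have hmp1 : (1 : ℝ) ≤ (m : ℝ) ^ p :=
    Real.one_le_rpow (by exact_mod_cast hm) hp0.le
  have hn1 : (1 : ℝ) ≤ (n : ℝ) := by exact_mod_cast hn
  have hkey : (∑ l, |(if l = j then B else 0) - (-(((ρ l i : ℕ) : ℝ) + 1))| ^ p) <
      (∑ l, |(if l = j then B else 0) - (-(((ρ l k : ℕ) : ℝ) + 1))| ^ p) := by
    rw [hsum i, hsum k]
    have h1 := hrest_le i
    have h2 := hrest_ge k
    nlinarith [hmono, hBbig]
  have hnonneg : (0 : ℝ) ≤ ∑ l, |(if l = j then B else 0) - (-(((ρ l i : ℕ) : ℝ) + 1))| ^ p :=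
    Finset.sum_nonneg fun l _ => by positivity
  exact Real.rpow_lt_rpow hnonneg hkey (by positivity)
end

section
/- (Median voter theorem, 1-dimensional spatial model) Suppose an odd number n of voters and m ≥ 1 candidates are located at points of ℝ, each voter ranks candidates by increasing distance |v − c| with all ties broken consistently (assume all distances from each voter to distinct candidates are distinct). Let v* be the median voter position and let c* be the candidate closest to v*. Then c* is a Condorcet winner: for every other candidate c, more than half the voters are strictly closer to c* than to c. -/
/-- If `a < b` and `x` is strictly left of the midpoint, `x` is strictly closer to `a`. -/
lemma mvt_aux (a b x : ℝ) (hab : a < b) (hx : x < (a + b) / 2) :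
    |x - a| < |x - b| := by
  have hb : x < b := by linarith
  rw [abs_sub_comm x b, abs_of_pos (by linarith : (0:ℝ) < b - x), abs_lt]
  constructor <;> linarith

/-- If `b < a` and `x` is strictly right of the midpoint, `x` is strictly closer to `a`. -/
lemma mvt_aux' (a b x : ℝ) (hab : b < a) (hx : (a + b) / 2 < x) :
    |x - a| < |x - b| := by
  have hb : b < x := by linarith
  rw [abs_of_pos (show (0:ℝ) < x - b by linarith), abs_lt]
  constructor <;> linarith

/-- Median voter theorem in one dimension: with an odd number of voters, tie-free distances,
a median voter position `vstar`, and `cstar` the candidate closest to `vstar`, the candidate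
`cstar` beats every other candidate: more than half the voters are strictly closer to it. -/
theorem median_voter_theorem (n m : ℕ) (hn : Odd n) (hm : 1 ≤ m)
    (V : Fin n → ℝ) (C : Fin m → ℝ)
    (hdist : ∀ (v : Fin n) (i k : Fin m), i ≠ k → |V v - C i| ≠ |V v - C k|)
    (vstar : ℝ)
    (hle : 2 * Nat.card {v : Fin n // V v ≤ vstar} ≥ n)
    (hge : 2 * Nat.card {v : Fin n // vstar ≤ V v} ≥ n)
    (istar : Fin m) (hmin : ∀ i, |vstar - C istar| ≤ |vstar - C i|) :
    ∀ i, i ≠ istar →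
      2 * Nat.card {v : Fin n // |V v - C istar| < |V v - C i|} > n := by
  intro i hi
  have hn0 : 0 < n := hn.pos
  have hne : C istar ≠ C i := by
    intro h
    exact hdist ⟨0, hn0⟩ istar i (Ne.symm hi) (by rw [h])
  -- generic step: if a set of voters of size ≥ n/2 all strictly prefer istar, done
  have key : ∀ (P : Fin n → Prop), 2 * Nat.card {v : Fin n // P v} ≥ n →
      (∀ v, P v → |V v - C istar| < |V v - C i|) →
      2 * Nat.card {v : Fin n // |V v - C istar| < |V v - C i|} > n := by
    intro P hP hsub
    have hmono : Nat.card {v : Fin n // P v} ≤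
        Nat.card {v : Fin n // |V v - C istar| < |V v - C i|} := by
      have := Nat.card_mono (Set.toFinite {v : Fin n | |V v - C istar| < |V v - C i|})
        (fun v hv => hsub v hv : {v : Fin n | P v} ⊆ {v : Fin n | |V v - C istar| < |V v - C i|})
      exact this
    obtain ⟨k, hk⟩ := hn
    omega
  set M : ℝ := (C istar + C i) / 2 with hM
  rcases lt_or_gt_of_ne hne with hlt | hgt
  · -- C istar < C i : all voters with V v ≤ vstar prefer istar
    have hvM : vstar ≤ M := by
      by_contra h
      push_neg at h
      have : |vstar - C i| < |vstar - C istar| :=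
        mvt_aux' (C i) (C istar) vstar hlt (by simp only [hM] at h; linarith)
      exact absurd (hmin i) (not_le.mpr this)
    refine key (fun v => V v ≤ vstar) hle ?_
    intro v hv
    have hvM' : V v ≤ M := le_trans hv hvM
    rcases lt_or_eq_of_le hvM' with h | h
    · exact mvt_aux _ _ _ hlt h
    · exfalso
      apply hdist v istar i (Ne.symm hi)
      have h1 : V v - C istar = (C i - C istar) / 2 := by rw [h, hM]; ring
      have h2 : V v - C i = -((C i - C istar) / 2) := by rw [h, hM]; ring
      rw [h1, h2, abs_neg]
  · -- C i < C istar : all voters with vstar ≤ V v prefer istar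
    have hvM : M ≤ vstar := by
      by_contra h
      push_neg at h
      have : |vstar - C i| < |vstar - C istar| := by
        exact mvt_aux (C i) (C istar) vstar hgt (by simp only [hM] at h; linarith)
      exact absurd (hmin i) (not_le.mpr this)
    refine key (fun v => vstar ≤ V v) hge ?_
    intro v hv
    have hvM' : M ≤ V v := le_trans hvM hv
    rcases lt_or_eq_of_le hvM' with h | h
    · exact mvt_aux' (C istar) (C i) (V v) hgt (by simp only [hM] at h; linarith)
    · exfalso
      apply hdist v istar i (Ne.symm hi)
      have h1 : V v - C istar = -((C istar - C i) / 2) := by rw [← h, hM]; ring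
      have h2 : V v - C i = (C istar - C i) / 2 := by rw [← h, hM]; ring
      rw [h1, h2, abs_neg]
end

section
/- In any 2-dimensional spatial election under the Manhattan norm (voters and candidates in ℝ², strict proximity preferences), if S = {c₁, c₂, c₃, c₄} consists of, for each nonempty quadrant (relative to the medians of voter coordinates), the candidate closest to the median point, then S is a Condorcet winning set. -/
private lemma d1_flip (εx εy : ℝ) (hx : εx = 1 ∨ εx = -1) (hy : εy = 1 ∨ εy = -1)
    (p q : ℝ × ℝ) : d1 (εx * p.1, εy * p.2) (εx * q.1, εy * q.2) = d1 p q := by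
  have e : ∀ (ε a b : ℝ), ε = 1 ∨ ε = -1 → |ε * a - ε * b| = |a - b| := by
    rintro ε a b (rfl | rfl) <;> rw [← mul_sub, abs_mul] <;> norm_num
  unfold d1
  simp only
  rw [e _ _ _ hx, e _ _ _ hy]

private lemma sign_abs (ε a : ℝ) (h : ε = 1 ∨ ε = -1) (ha : 0 ≤ ε * a) : ε * a = |a| := by
  rcases h with rfl | rfl
  · rw [one_mul] at ha ⊢; exact (abs_of_nonneg ha).symm
  · have : a ≤ 0 := by linarith
    rw [abs_of_nonpos this]; ring

private lemma halfplane_key (c j : ℝ × ℝ) (hc1 : 0 ≤ c.1) (hc2 : 0 ≤ c.2)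
    (hj1 : 0 ≤ j.1) (hj2 : 0 ≤ j.2) (hnm : c.1 + c.2 ≤ j.1 + j.2) :
    (∀ v : ℝ × ℝ, v.2 ≤ 0 → d1 v c ≤ d1 v j) ∨
    (∀ v : ℝ × ℝ, v.1 ≤ 0 → d1 v c ≤ d1 v j) := by
  by_cases h : |j.1 - c.1| ≤ j.2 - c.2
  · left
    intro v hv
    unfold d1
    have h1 : |v.1 - c.1| ≤ |v.1 - j.1| + |j.1 - c.1| := abs_sub_le _ _ _
    have h2 : |v.2 - c.2| = c.2 - v.2 := by
      rw [abs_sub_comm]; exact abs_of_nonneg (by linarith)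
    have h3 : |v.2 - j.2| = j.2 - v.2 := by
      rw [abs_sub_comm]; exact abs_of_nonneg (by linarith)
    linarith
  · right
    have h' : |j.2 - c.2| ≤ j.1 - c.1 := by
      push_neg at h
      rcases abs_cases (j.1 - c.1) with ⟨e1, _⟩ | ⟨e1, _⟩ <;>
        rcases abs_cases (j.2 - c.2) with ⟨e2, _⟩ | ⟨e2, _⟩ <;> linarith
    intro v hv
    unfold d1
    have h1 : |v.2 - c.2| ≤ |v.2 - j.2| + |j.2 - c.2| := abs_sub_le _ _ _
    have h2 : |v.1 - c.1| = c.1 - v.1 := by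
      rw [abs_sub_comm]; exact abs_of_nonneg (by linarith)
    have h3 : |v.1 - j.1| = j.1 - v.1 := by
      rw [abs_sub_comm]; exact abs_of_nonneg (by linarith)
    linarith

private lemma halfplane_key' (εx εy : ℝ) (hx : εx = 1 ∨ εx = -1) (hy : εy = 1 ∨ εy = -1)
    (c j : ℝ × ℝ) (hc1 : 0 ≤ εx * c.1) (hc2 : 0 ≤ εy * c.2)
    (hj1 : 0 ≤ εx * j.1) (hj2 : 0 ≤ εy * j.2) (hnm : d1 (0, 0) c ≤ d1 (0, 0) j) :
    (∀ v : ℝ × ℝ, εy * v.2 ≤ 0 → d1 v c ≤ d1 v j) ∨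
    (∀ v : ℝ × ℝ, εx * v.1 ≤ 0 → d1 v c ≤ d1 v j) := by
  have hcn : d1 (0, 0) c = εx * c.1 + εy * c.2 := by
    unfold d1
    rw [sign_abs εx c.1 hx hc1, sign_abs εy c.2 hy hc2]
    simp
  have hjn : d1 (0, 0) j = εx * j.1 + εy * j.2 := by
    unfold d1
    rw [sign_abs εx j.1 hx hj1, sign_abs εy j.2 hy hj2]
    simp
  have key := halfplane_key (εx * c.1, εy * c.2) (εx * j.1, εy * j.2)
    hc1 hc2 hj1 hj2 (by simp only; linarith)
  rcases key with H | H
  · left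
    intro v hv
    have := H (εx * v.1, εy * v.2) hv
    rwa [d1_flip εx εy hx hy v c, d1_flip εx εy hx hy v j] at this
  · right
    intro v hv
    have := H (εx * v.1, εy * v.2) hv
    rwa [d1_flip εx εy hx hy v c, d1_flip εx εy hx hy v j] at this

private lemma count_finish {n : ℕ} (hn : Odd n) (P Q : Fin n → Prop)
    (himp : ∀ v, P v → Q v) (hc : 2 * Nat.card {v // P v} ≥ n) :
    2 * Nat.card {v // Q v} > n := by
  have h1 : Nat.card {v // P v} ≤ Nat.card {v // Q v} := by
    apply Nat.card_le_card_of_injective (fun x => ⟨x.1, himp x.1 x.2⟩)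
    intro a b hab
    exact Subtype.ext (by simpa using congrArg Subtype.val hab)
  obtain ⟨k, hk⟩ := hn
  omega

/-- In a 2-dimensional spatial election under the Manhattan norm with strict (tie-free) proximity
preferences, an odd number of voters, and voter coordinate medians at the origin: if `S` consists,
for each nonempty closed quadrant, of a candidate of that quadrant closest (in ℓ¹) to the origin,
then `S` is a Condorcet winning set. -/
theorem quadrant_set_is_condorcet (n m : ℕ) (hn : Odd n)
    (V : Fin n → ℝ × ℝ) (C : Fin m → ℝ × ℝ)
    (hdist : ∀ (v : Fin n) (i k : Fin m), i ≠ k → d1 (V v) (C i) ≠ d1 (V v) (C k))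
    (hxle : 2 * Nat.card {v : Fin n // (V v).1 ≤ 0} ≥ n)
    (hxge : 2 * Nat.card {v : Fin n // 0 ≤ (V v).1} ≥ n)
    (hyle : 2 * Nat.card {v : Fin n // (V v).2 ≤ 0} ≥ n)
    (hyge : 2 * Nat.card {v : Fin n // 0 ≤ (V v).2} ≥ n)
    (S : Finset (Fin m))
    -- every member of `S` is a closest-to-origin candidate of some closed quadrant
    (hSmin : ∀ i ∈ S, ∃ εx εy : ℝ, (εx = 1 ∨ εx = -1) ∧ (εy = 1 ∨ εy = -1) ∧
      (0 ≤ εx * (C i).1 ∧ 0 ≤ εy * (C i).2) ∧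
      ∀ k, (0 ≤ εx * (C k).1 ∧ 0 ≤ εy * (C k).2) → d1 (0, 0) (C i) ≤ d1 (0, 0) (C k))
    -- every nonempty closed quadrant contributes such a closest candidate to `S`
    (hScov : ∀ εx εy : ℝ, (εx = 1 ∨ εx = -1) → (εy = 1 ∨ εy = -1) →
      (∃ k, 0 ≤ εx * (C k).1 ∧ 0 ≤ εy * (C k).2) →
      ∃ i ∈ S, (0 ≤ εx * (C i).1 ∧ 0 ≤ εy * (C i).2) ∧
        ∀ k, (0 ≤ εx * (C k).1 ∧ 0 ≤ εy * (C k).2) → d1 (0, 0) (C i) ≤ d1 (0, 0) (C k)) :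
    ∀ j, j ∉ S →
      2 * Nat.card {v : Fin n // ∃ i ∈ S, d1 (V v) (C i) < d1 (V v) (C j)} > n := by
  intro j hj
  have hex : ∃ εx : ℝ, (εx = 1 ∨ εx = -1) ∧ 0 ≤ εx * (C j).1 := by
    by_cases h : 0 ≤ (C j).1
    · exact ⟨1, Or.inl rfl, by linarith [h, one_mul (C j).1]⟩
    · push_neg at h
      exact ⟨-1, Or.inr rfl, by nlinarith⟩
  have hey : ∃ εy : ℝ, (εy = 1 ∨ εy = -1) ∧ 0 ≤ εy * (C j).2 := by
    by_cases h : 0 ≤ (C j).2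
    · exact ⟨1, Or.inl rfl, by linarith [h, one_mul (C j).2]⟩
    · push_neg at h
      exact ⟨-1, Or.inr rfl, by nlinarith⟩
  obtain ⟨εx, hεx, hjx⟩ := hex
  obtain ⟨εy, hεy, hjy⟩ := hey
  obtain ⟨i, hiS, ⟨hix, hiy⟩, hmin⟩ := hScov εx εy hεx hεy ⟨j, hjx, hjy⟩
  have hnorm : d1 (0, 0) (C i) ≤ d1 (0, 0) (C j) := hmin j ⟨hjx, hjy⟩
  have hij : i ≠ j := by rintro rfl; exact hj hiS
  rcases halfplane_key' εx εy hεx hεy (C i) (C j) hix hiy hjx hjy hnorm with H | H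
  · refine count_finish hn (fun v => εy * (V v).2 ≤ 0) _
      (fun v hv => ⟨i, hiS, lt_of_le_of_ne (H (V v) hv) (hdist v i j hij)⟩) ?_
    rcases hεy with rfl | rfl
    · simpa using hyle
    · simpa using hyge
  · refine count_finish hn (fun v => εx * (V v).1 ≤ 0) _
      (fun v hv => ⟨i, hiS, lt_of_le_of_ne (H (V v) hv) (hdist v i j hij)⟩) ?_
    rcases hεx with rfl | rfl
    · simpa using hxle
    · simpa using hxge
end
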